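/- arXiv:2506.23991 — 9 statements merged into one kernel-verified Lean document; each statement's English description precedes it below -/
import Mathlib

section
/- Let Σ × {0} ⊆ M be the constraint subspace, with annihilator {0} × C* and π-orthogonal complement (Σ×{0})^{π⊥} = π({0} × C*). Then (Σ × {0}) ∩ π({0} × C*) = {0} if and only if ker π_cc ⊆ ker π_σc. (Pointwise linear-algebraic content of Proposition 1: the constraint set is Poisson–Dirac exactly when the kernel-nesting condition ker{c,c} ⊆ ker{σ,c} holds.) -/
/-- The constraint subspace `Σ × {0} ⊆ M = Σ × C` has trivial
intersection with its π-orthogonal complement `π({0} × C*)` if and only if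
`ker π_cc ⊆ ker π_σc`. -/
theorem constraint_poissonDirac_iff_ker_nesting
    (S C : Type*) [AddCommGroup S] [Module ℝ S] [FiniteDimensional ℝ S]
    [AddCommGroup C] [Module ℝ C] [FiniteDimensional ℝ C]
    (Pmap : Module.Dual ℝ S × Module.Dual ℝ C →ₗ[ℝ] S × C)
    (Pσσ : Module.Dual ℝ S →ₗ[ℝ] S) (Pσc : Module.Dual ℝ C →ₗ[ℝ] S)
    (Pcσ : Module.Dual ℝ S →ₗ[ℝ] C) (Pcc : Module.Dual ℝ C →ₗ[ℝ] C)
    (hblock : ∀ (ξ : Module.Dual ℝ S) (η : Module.Dual ℝ C),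
      Pmap (ξ, η) = (Pσσ ξ + Pσc η, Pcσ ξ + Pcc η))
    (hskew : ∀ α β : Module.Dual ℝ S × Module.Dual ℝ C,
      α.1 (Pmap β).1 + α.2 (Pmap β).2 = -(β.1 (Pmap α).1 + β.2 (Pmap α).2)) :
    ((⊤ : Submodule ℝ S).prod (⊥ : Submodule ℝ C)) ⊓
        Submodule.map Pmap
          ((⊥ : Submodule ℝ (Module.Dual ℝ S)).prod
            (⊤ : Submodule ℝ (Module.Dual ℝ C))) = ⊥
      ↔ LinearMap.ker Pcc ≤ LinearMap.ker Pσc := by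
  constructor
  · intro h η hη
    have hmem : ((Pσc η, (0 : C)) : S × C) ∈
        ((⊤ : Submodule ℝ S).prod (⊥ : Submodule ℝ C)) ⊓
        Submodule.map Pmap
          ((⊥ : Submodule ℝ (Module.Dual ℝ S)).prod
            (⊤ : Submodule ℝ (Module.Dual ℝ C))) := by
      constructor
      · exact ⟨trivial, rfl⟩
      · refine ⟨(0, η), ⟨rfl, trivial⟩, ?_⟩
        rw [hblock]
        simp [LinearMap.mem_ker.mp hη]
    rw [h] at hmem
    have : Pσc η = 0 := congrArg Prod.fst hmem
    simpa [LinearMap.mem_ker] using this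
  · intro h
    rw [eq_bot_iff]
    rintro x ⟨⟨-, hx2⟩, ⟨ξ, η⟩, ⟨hξ, -⟩, hx⟩
    simp only [Submodule.mem_bot] at hξ hx2 ⊢
    subst hξ
    rw [hblock] at hx
    have hcc : Pcc η = 0 := by
      have h2 := congrArg Prod.snd hx
      simp only [Prod.snd] at h2
      rw [hx2] at h2
      simpa using h2
    have hsc : Pσc η = 0 := h hcc
    rw [← hx, hsc, hcc]
    simp [Prod.ext_iff]
end

section
/- The block map π_cc : C* → C is bijective if and only if both of the following hold: (PT.1) (Σ × {0}) ∩ π({0} × C*) = {0}, and (PT.2) (Σ × {0}) + range(π) = M. (Pointwise linear-algebraic content of Proposition 3: the matrix of constraint brackets {c,c} is invertible exactly when the constraint set is a Poisson transversal.) -/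
/-- The block map `π_cc : C* → C` is bijective if and only if the
constraint subspace `Σ × {0}` is a Poisson transversal, i.e. (PT.1)
`(Σ × {0}) ∩ π({0} × C*) = {0}` and (PT.2) `(Σ × {0}) + range(π) = M`. -/
theorem cc_block_bijective_iff_poisson_transversal
    (S C : Type*) [AddCommGroup S] [Module ℝ S] [FiniteDimensional ℝ S]
    [AddCommGroup C] [Module ℝ C] [FiniteDimensional ℝ C]
    (Pmap : Module.Dual ℝ S × Module.Dual ℝ C →ₗ[ℝ] S × C)
    (Pσσ : Module.Dual ℝ S →ₗ[ℝ] S) (Pσc : Module.Dual ℝ C →ₗ[ℝ] S)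
    (Pcσ : Module.Dual ℝ S →ₗ[ℝ] C) (Pcc : Module.Dual ℝ C →ₗ[ℝ] C)
    (hblock : ∀ (ξ : Module.Dual ℝ S) (η : Module.Dual ℝ C),
      Pmap (ξ, η) = (Pσσ ξ + Pσc η, Pcσ ξ + Pcc η))
    (hskew : ∀ α β : Module.Dual ℝ S × Module.Dual ℝ C,
      α.1 (Pmap β).1 + α.2 (Pmap β).2 = -(β.1 (Pmap α).1 + β.2 (Pmap α).2)) :
    Function.Bijective Pcc
      ↔ (((⊤ : Submodule ℝ S).prod (⊥ : Submodule ℝ C)) ⊓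
            Submodule.map Pmap
              ((⊥ : Submodule ℝ (Module.Dual ℝ S)).prod
                (⊤ : Submodule ℝ (Module.Dual ℝ C))) = ⊥
          ∧ ((⊤ : Submodule ℝ S).prod (⊥ : Submodule ℝ C)) ⊔
              LinearMap.range Pmap = ⊤) := by
  have hP0 : ∀ η : Module.Dual ℝ C, Pmap (0, η) = (Pσc η, Pcc η) := by
    intro η
    rw [hblock]
    simp
  constructor
  · rintro ⟨hinj, hsurj⟩
    constructor
    · -- PT.1
      rw [eq_bot_iff]
      rintro ⟨s, c⟩ ⟨hmem, hmap⟩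
      simp only [SetLike.mem_coe, Submodule.mem_prod, Submodule.mem_top,
        Submodule.mem_bot, true_and] at hmem
      obtain ⟨⟨ξ, η⟩, hαmem, hα⟩ := hmap
      simp only [SetLike.mem_coe, Submodule.mem_prod, Submodule.mem_top,
        Submodule.mem_bot, and_true] at hαmem
      have hξ : ξ = 0 := hαmem
      subst hξ
      rw [hP0] at hα
      have hc : Pcc η = 0 := by
        have := congrArg Prod.snd hα
        simpa using this.trans hmem
      have hη : η = 0 := by
        apply hinj
        simpa using hc
      subst hη
      simp only [map_zero] at hα
      rw [← hα]
      simp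
    · -- PT.2
      rw [eq_top_iff]
      rintro ⟨s, c⟩ -
      obtain ⟨η, hη⟩ := hsurj c
      rw [Submodule.mem_sup]
      refine ⟨(s - Pσc η, 0), ?_, Pmap (0, η), ⟨(0, η), rfl⟩, ?_⟩
      · rw [Submodule.mem_prod]; simp
      · rw [hP0, hη]
        simp
  · rintro ⟨h1, h2⟩
    have hker : ∀ η : Module.Dual ℝ C, Pcc η = 0 → η = 0 := by
      intro η hη
      have hmem : Pmap (0, η) ∈ ((⊤ : Submodule ℝ S).prod (⊥ : Submodule ℝ C)) ⊓
          Submodule.map Pmap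
            ((⊥ : Submodule ℝ (Module.Dual ℝ S)).prod
              (⊤ : Submodule ℝ (Module.Dual ℝ C))) := by
        constructor
        · rw [hP0, hη]; simp [Submodule.mem_prod]
        · exact ⟨(0, η), by simp [Submodule.mem_prod], rfl⟩
      rw [h1, Submodule.mem_bot] at hmem
      -- now show η c = 0 for all c
      ext c
      have hc : ((0 : S), c) ∈ ((⊤ : Submodule ℝ S).prod (⊥ : Submodule ℝ C)) ⊔
          LinearMap.range Pmap := h2 ▸ Submodule.mem_top
      rw [Submodule.mem_sup] at hc
      obtain ⟨⟨s', c'⟩, hy, z, ⟨α, hz⟩, hsum⟩ := hc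
      rw [Submodule.mem_prod] at hy
      have hc' : c' = (0 : C) := hy.2
      have hcc : c = c' + (Pmap α).2 := by
        have := congrArg Prod.snd hsum
        simp only [← hz] at this ⊢
        exact this.symm
      have hsk := hskew (0, η) α
      rw [hmem] at hsk
      simp only [map_zero, Prod.fst_zero, Prod.snd_zero, LinearMap.zero_apply] at hsk
      have : η (Pmap α).2 = 0 := by simpa using hsk
      rw [hcc, hc']
      simp [this]
    constructor
    · intro a b hab
      have h : Pcc (a - b) = 0 := by rw [map_sub, hab, sub_self]
      exact sub_eq_zero.mp (hker _ h)
    · have hinj : Function.Injective Pcc := by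
        intro a b hab
        have h : Pcc (a - b) = 0 := by rw [map_sub, hab, sub_self]
        exact sub_eq_zero.mp (hker _ h)
      exact (LinearMap.injective_iff_surjective_of_finrank_eq_finrank
        (Subspace.dual_finrank_eq)).mp hinj
end

section
/- Assume ker π_cc ⊆ ker π_σc. Then for every ξ ∈ Σ* there exists η ∈ C* such that π_cσ(ξ) + π_cc(η) = 0. (Solvability of the equations defining Δf/Δc in the Poisson–Dirac bracket: the solvability conditions v · {c,σ} · δf/δσ = 0 for v ∈ ker{c,c} are automatically satisfied under the kernel-nesting condition.) -/
/-- Under the kernel-nesting condition `ker π_cc ⊆ ker π_σc`,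
for every `ξ ∈ Σ*` there exists `η ∈ C*` with `π_cσ(ξ) + π_cc(η) = 0`
(solvability of the equations defining `Δf/Δc`). -/
theorem poissonDirac_equations_solvable
    (S C : Type*) [AddCommGroup S] [Module ℝ S] [FiniteDimensional ℝ S]
    [AddCommGroup C] [Module ℝ C] [FiniteDimensional ℝ C]
    (Pmap : Module.Dual ℝ S × Module.Dual ℝ C →ₗ[ℝ] S × C)
    (Pσσ : Module.Dual ℝ S →ₗ[ℝ] S) (Pσc : Module.Dual ℝ C →ₗ[ℝ] S)
    (Pcσ : Module.Dual ℝ S →ₗ[ℝ] C) (Pcc : Module.Dual ℝ C →ₗ[ℝ] C)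
    (hblock : ∀ (ξ : Module.Dual ℝ S) (η : Module.Dual ℝ C),
      Pmap (ξ, η) = (Pσσ ξ + Pσc η, Pcσ ξ + Pcc η))
    (hskew : ∀ α β : Module.Dual ℝ S × Module.Dual ℝ C,
      α.1 (Pmap β).1 + α.2 (Pmap β).2 = -(β.1 (Pmap α).1 + β.2 (Pmap α).2))
    (hker : LinearMap.ker Pcc ≤ LinearMap.ker Pσc) :
    ∀ ξ : Module.Dual ℝ S, ∃ η : Module.Dual ℝ C, Pcσ ξ + Pcc η = 0 := by
  intro ξ
  -- derive skew relations
  have hcc : ∀ η ζ : Module.Dual ℝ C, η (Pcc ζ) = -(ζ (Pcc η)) := by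
    intro η ζ
    have := hskew (0, η) (0, ζ)
    simpa [hblock] using this
  have hmix : ∀ (η : Module.Dual ℝ C), η (Pcσ ξ) = -(ξ (Pσc η)) := by
    intro η
    have := hskew (ξ, 0) (0, η)
    simp [hblock] at this
    linarith
  have hmem : -Pcσ ξ ∈ LinearMap.range Pcc := by
    rw [← Subspace.dualAnnihilator_dualCoannihilator_eq (W := LinearMap.range Pcc),
      Submodule.mem_dualCoannihilator]
    intro η hη
    rw [Submodule.mem_dualAnnihilator] at hη
    have h0 : Pcc η = 0 := by
      rw [← Module.forall_dual_apply_eq_zero_iff ℝ]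
      intro ζ
      have := hη (Pcc ζ) ⟨ζ, rfl⟩
      rw [hcc] at this
      linarith
    have h1 : Pσc η = 0 := hker h0
    have := hmix η
    rw [h1] at this
    simp at this
    simp [this]
  obtain ⟨η, hη⟩ := hmem
  exact ⟨η, by rw [hη]; simp⟩
end

section
/- Let ξ_f, ξ_g ∈ Σ*, and suppose η_f, η_f' ∈ C* both satisfy π_cσ(ξ_f) + π_cc(η) = 0 and η_g, η_g' ∈ C* both satisfy π_cσ(ξ_g) + π_cc(η) = 0. Then η_f − η_f' ∈ ker π_cc and η_g − η_g' ∈ ker π_cc, and ⟨η_f, π_cc(η_g)⟩ = ⟨η_f', π_cc(η_g')⟩. (Solutions of the Poisson–Dirac equations are determined modulo ker{c,c}, and this non-uniqueness does not affect the value of the bracket {f,g}_PD.) -/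
/-- Solutions of the Poisson–Dirac equations are determined modulo
`ker π_cc`, and this non-uniqueness does not affect the value `⟨η_f, π_cc(η_g)⟩`. -/
theorem poissonDirac_bracket_independent_of_solution
    (S C : Type*) [AddCommGroup S] [Module ℝ S] [FiniteDimensional ℝ S]
    [AddCommGroup C] [Module ℝ C] [FiniteDimensional ℝ C]
    (Pmap : Module.Dual ℝ S × Module.Dual ℝ C →ₗ[ℝ] S × C)
    (Pσσ : Module.Dual ℝ S →ₗ[ℝ] S) (Pσc : Module.Dual ℝ C →ₗ[ℝ] S)
    (Pcσ : Module.Dual ℝ S →ₗ[ℝ] C) (Pcc : Module.Dual ℝ C →ₗ[ℝ] C)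
    (hblock : ∀ (ξ : Module.Dual ℝ S) (η : Module.Dual ℝ C),
      Pmap (ξ, η) = (Pσσ ξ + Pσc η, Pcσ ξ + Pcc η))
    (hskew : ∀ α β : Module.Dual ℝ S × Module.Dual ℝ C,
      α.1 (Pmap β).1 + α.2 (Pmap β).2 = -(β.1 (Pmap α).1 + β.2 (Pmap α).2))
    (ξf ξg : Module.Dual ℝ S) (ηf ηf' ηg ηg' : Module.Dual ℝ C)
    (hf : Pcσ ξf + Pcc ηf = 0) (hf' : Pcσ ξf + Pcc ηf' = 0)
    (hg : Pcσ ξg + Pcc ηg = 0) (hg' : Pcσ ξg + Pcc ηg' = 0) :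
    ηf - ηf' ∈ LinearMap.ker Pcc ∧ ηg - ηg' ∈ LinearMap.ker Pcc ∧
      ηf (Pcc ηg) = ηf' (Pcc ηg') := by
  have hcf : Pcc ηf = Pcc ηf' := by
    have : Pcc ηf = -Pcσ ξf := by linear_combination (norm := module) hf
    rw [this]; linear_combination (norm := module) -hf'
  have hcg : Pcc ηg = Pcc ηg' := by
    have : Pcc ηg = -Pcσ ξg := by linear_combination (norm := module) hg
    rw [this]; linear_combination (norm := module) -hg'
  have skewcc : ∀ η η' : Module.Dual ℝ C, η (Pcc η') = - η' (Pcc η) := by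
    intro η η'
    have h := hskew (0, η) (0, η')
    simpa [hblock] using h
  refine ⟨?_, ?_, ?_⟩
  · simp [LinearMap.mem_ker, map_sub, hcf]
  · simp [LinearMap.mem_ker, map_sub, hcg]
  · have h2 : Pcc (ηf - ηf') = 0 := by simp [map_sub, hcf]
    have h1 : ηf (Pcc ηg') - ηf' (Pcc ηg') = 0 := by
      have h := skewcc (ηf - ηf') ηg'
      rw [h2] at h
      simpa [sub_eq_zero, LinearMap.sub_apply] using h
    rw [hcg]
    linarith
end

section
/- Let ξ_f, ξ_g ∈ Σ* and suppose η_f, η_g ∈ C* satisfy π_cσ(ξ_f) + π_cc(η_f) = 0 and π_cσ(ξ_g) + π_cc(η_g) = 0. Then ⟨(ξ_f, η_f), π(ξ_g, η_g)⟩ = ⟨ξ_f, π_σσ(ξ_g)⟩ − ⟨η_f, π_cc(η_g)⟩. (Pointwise content of Proposition 2: the bracket of extensions f̃ = f(σ) + h(c), g̃ = g(σ) + r(c) whose Hamiltonian vector fields are tangent to the constraint set equals the Poisson–Dirac bracket formula {f,g}_PD = (δf/δσ)·{σ,σ}·(δg/δσ) − (Δf/Δc)·{c,c}·(Δg/Δc).)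 -/
/-- If `π_cσ(ξ_f) + π_cc(η_f) = 0` and `π_cσ(ξ_g) + π_cc(η_g) = 0`,
then `⟨(ξ_f, η_f), π(ξ_g, η_g)⟩ = ⟨ξ_f, π_σσ(ξ_g)⟩ − ⟨η_f, π_cc(η_g)⟩`
(the Poisson–Dirac bracket formula as the bracket of tangent extensions). -/
theorem extension_bracket_eq_poissonDirac_bracket
    (S C : Type*) [AddCommGroup S] [Module ℝ S] [FiniteDimensional ℝ S]
    [AddCommGroup C] [Module ℝ C] [FiniteDimensional ℝ C]
    (Pmap : Module.Dual ℝ S × Module.Dual ℝ C →ₗ[ℝ] S × C)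
    (Pσσ : Module.Dual ℝ S →ₗ[ℝ] S) (Pσc : Module.Dual ℝ C →ₗ[ℝ] S)
    (Pcσ : Module.Dual ℝ S →ₗ[ℝ] C) (Pcc : Module.Dual ℝ C →ₗ[ℝ] C)
    (hblock : ∀ (ξ : Module.Dual ℝ S) (η : Module.Dual ℝ C),
      Pmap (ξ, η) = (Pσσ ξ + Pσc η, Pcσ ξ + Pcc η))
    (hskew : ∀ α β : Module.Dual ℝ S × Module.Dual ℝ C,
      α.1 (Pmap β).1 + α.2 (Pmap β).2 = -(β.1 (Pmap α).1 + β.2 (Pmap α).2))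
    (ξf ξg : Module.Dual ℝ S) (ηf ηg : Module.Dual ℝ C)
    (hf : Pcσ ξf + Pcc ηf = 0) (hg : Pcσ ξg + Pcc ηg = 0) :
    ξf (Pmap (ξg, ηg)).1 + ηf (Pmap (ξg, ηg)).2
      = ξf (Pσσ ξg) - ηf (Pcc ηg) := by
  have key := hskew (ξf, ηf) (0, ηg)
  simp only [hblock] at key ⊢
  simp only [hf, map_zero, zero_add] at key
  rw [hg]
  simp only [map_zero, map_add, add_zero, LinearMap.zero_apply, neg_zero] at key ⊢
  linarith
end

section
/- Let W ⊆ V be a subspace and let α̃, α̃', β̃, β̃' ∈ V* all vanish identically on π(W°). If α̃ and α̃' agree on W and β̃ and β̃' agree on W, then ⟨α̃, π(β̃)⟩ = ⟨α̃', π(β̃')⟩. (The induced pointwise bivector on a Poisson–Dirac submanifold is well defined: the value π_p((df_p)~, (dg_p)~) does not depend on the choice of extensions vanishing on (T_pN)^{π⊥}.) -/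
/-- The induced pointwise bivector on a Poisson–Dirac submanifold
is well defined: if `α̃, α̃', β̃, β̃'` all vanish on `π(W°)`, `α̃ = α̃'` on `W`
and `β̃ = β̃'` on `W`, then `⟨α̃, π(β̃)⟩ = ⟨α̃', π(β̃')⟩`. -/
theorem induced_bivector_well_defined
    (V : Type*) [AddCommGroup V] [Module ℝ V] [FiniteDimensional ℝ V]
    (Pmap : Module.Dual ℝ V →ₗ[ℝ] V)
    (hskew : ∀ α β : Module.Dual ℝ V, α (Pmap β) = -(β (Pmap α)))
    (W : Submodule ℝ V)
    (αt αt' βt βt' : Module.Dual ℝ V)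
    (hα0 : ∀ v ∈ Submodule.map Pmap W.dualAnnihilator, αt v = 0)
    (hα0' : ∀ v ∈ Submodule.map Pmap W.dualAnnihilator, αt' v = 0)
    (hβ0 : ∀ v ∈ Submodule.map Pmap W.dualAnnihilator, βt v = 0)
    (hβ0' : ∀ v ∈ Submodule.map Pmap W.dualAnnihilator, βt' v = 0)
    (hα : ∀ w ∈ W, αt w = αt' w) (hβ : ∀ w ∈ W, βt w = βt' w) :
    αt (Pmap βt) = αt' (Pmap βt') := by
  have hαmem : αt - αt' ∈ W.dualAnnihilator := by
    rw [Submodule.mem_dualAnnihilator]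
    intro w hw
    simp [hα w hw]
  have hβmem : βt - βt' ∈ W.dualAnnihilator := by
    rw [Submodule.mem_dualAnnihilator]
    intro w hw
    simp [hβ w hw]
  have h1 : βt (Pmap (αt - αt')) = 0 :=
    hβ0 _ (Submodule.mem_map_of_mem hαmem)
  have h2 : αt' (Pmap (βt - βt')) = 0 :=
    hα0' _ (Submodule.mem_map_of_mem hβmem)
  have e1 : βt (Pmap αt) = βt (Pmap αt') := by
    have := h1; rw [map_sub, map_sub, sub_eq_zero] at this; exact this
  have e2 : αt' (Pmap βt) = αt' (Pmap βt') := by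
    have := h2; rw [map_sub, map_sub, sub_eq_zero] at this; exact this
  calc αt (Pmap βt) = -(βt (Pmap αt)) := hskew _ _
    _ = -(βt (Pmap αt')) := by rw [e1]
    _ = αt' (Pmap βt) := (hskew _ _).symm
    _ = αt' (Pmap βt') := e2
end

section
/- Define ω on range(π) by ω(π(α), π(β)) := ⟨α, π(β)⟩; this is well defined (the value depends only on π(α) and π(β), not on the choice of preimages α, β). If moreover W ∩ π(W°) = {0}, then the restriction of ω to the subspace W ∩ range(π) is nondegenerate, i.e. W ∩ range(π) is a symplectic subspace of the image of π. (Condition PD.1 implies the intersection of the tangent space of the submanifold with the image of π^# is a symplectic subspace.) -/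
/-- The form `ω(π(α), π(β)) := ⟨α, π(β)⟩` on `range(π)` is well
defined, and if `W ∩ π(W°) = {0}` then its restriction to `W ∩ range(π)` is
nondegenerate: `W ∩ range(π)` is a symplectic subspace of the image of `π`. -/
theorem image_symplectic_form_well_defined_and_nondegenerate_on_intersection
    (V : Type*) [AddCommGroup V] [Module ℝ V] [FiniteDimensional ℝ V]
    (Pmap : Module.Dual ℝ V →ₗ[ℝ] V)
    (hskew : ∀ α β : Module.Dual ℝ V, α (Pmap β) = -(β (Pmap α)))
    (W : Submodule ℝ V) :
    (∀ α α' β β' : Module.Dual ℝ V,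
        Pmap α = Pmap α' → Pmap β = Pmap β' → α (Pmap β) = α' (Pmap β'))
    ∧ (W ⊓ Submodule.map Pmap W.dualAnnihilator = ⊥ →
        ∀ α : Module.Dual ℝ V, Pmap α ∈ W →
          (∀ β : Module.Dual ℝ V, Pmap β ∈ W → α (Pmap β) = 0) →
          Pmap α = 0) := by
  constructor
  · intro α α' β β' hα hβ
    rw [hβ, hskew α β', hα, ← hskew α' β']
  · intro h α hαW hperp
    have hUeq : (Submodule.comap Pmap W) =
        (Submodule.map Pmap W.dualAnnihilator).dualAnnihilator := by
      ext γ
      simp only [Submodule.mem_comap, Submodule.mem_dualAnnihilator]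
      constructor
      · rintro hγ v ⟨δ, hδ, rfl⟩
        rw [hskew γ δ, (Submodule.mem_dualAnnihilator δ).mp hδ _ hγ, neg_zero]
      · intro hγ
        have : Pmap γ ∈ W.dualAnnihilator.dualCoannihilator := by
          rw [Submodule.mem_dualCoannihilator]
          intro δ hδ
          have := hγ (Pmap δ) ⟨δ, hδ, rfl⟩
          rw [hskew γ δ] at this
          linarith
        rwa [Subspace.dualAnnihilator_dualCoannihilator_eq] at this
    have hmem : Pmap α ∈ Submodule.map Pmap W.dualAnnihilator := by
      have : Pmap α ∈ (Submodule.comap Pmap W).dualCoannihilator := by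
        rw [Submodule.mem_dualCoannihilator]
        intro γ hγ
        rw [Submodule.mem_comap] at hγ
        have := hperp γ hγ
        rw [hskew α γ] at this
        linarith
      rw [hUeq, Subspace.dualAnnihilator_dualCoannihilator_eq] at this
      exact this
    have : Pmap α ∈ W ⊓ Submodule.map Pmap W.dualAnnihilator := ⟨hαW, hmem⟩
    rw [h] at this
    exact this
end

section
/- Suppose W ∩ π(W°) = {0}. Define the induced skew bilinear form π_W on linear functionals of W by π_W(α, β) := ⟨α̃, π(β̃)⟩, where α̃, β̃ ∈ V* are any extensions of α, β that vanish on π(W°) (such extensions exist and the value is independent of the choice). Then rank(π) = rank(π_W) + dim π(W°), where the rank of a bilinear form is the rank of its associated linear map. (Linear theory of Poisson–Dirac submanifolds: rk T_pN^{π⊥} + rk π_{N,p} = rk π_p.) -/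
set_option maxHeartbeats 1000000 in
/-- Linear theory of Poisson–Dirac submanifolds:
`rank(π) = rank(π_W) + dim π(W°)`, where `π_W` is the induced bilinear form on
linear functionals of `W`, characterized by `π_W(α, β) = ⟨α̃, π(β̃)⟩` for any
extensions `α̃, β̃` of `α, β` vanishing on `π(W°)`. -/
theorem rank_decomposition_poissonDirac
    (V : Type*) [AddCommGroup V] [Module ℝ V] [FiniteDimensional ℝ V]
    (Pmap : Module.Dual ℝ V →ₗ[ℝ] V)
    (hskew : ∀ α β : Module.Dual ℝ V, α (Pmap β) = -(β (Pmap α)))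
    (W : Submodule ℝ V)
    (hW : W ⊓ Submodule.map Pmap W.dualAnnihilator = ⊥)
    (B : Module.Dual ℝ W →ₗ[ℝ] Module.Dual ℝ W →ₗ[ℝ] ℝ)
    (hB : ∀ (α β : Module.Dual ℝ W) (αt βt : Module.Dual ℝ V),
      (∀ w : W, αt (w : V) = α w) → (∀ w : W, βt (w : V) = β w) →
      (∀ v ∈ Submodule.map Pmap W.dualAnnihilator, αt v = 0) →
      (∀ v ∈ Submodule.map Pmap W.dualAnnihilator, βt v = 0) →
      B α β = αt (Pmap βt)) :
    Module.finrank ℝ (LinearMap.range Pmap)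
      = Module.finrank ℝ (LinearMap.range B)
        + Module.finrank ℝ (Submodule.map Pmap W.dualAnnihilator) := by
  classical
  set N : Submodule ℝ V := Submodule.map Pmap W.dualAnnihilator with hNdef
  -- Key characterization: γ ∈ N° ↔ Pmap γ ∈ W
  have hkey : ∀ γ : Module.Dual ℝ V, γ ∈ N.dualAnnihilator ↔ Pmap γ ∈ W := by
    intro γ
    constructor
    · intro h
      rw [Submodule.mem_dualAnnihilator] at h
      rw [← Subspace.dualAnnihilator_dualCoannihilator_eq (W := W),
        Submodule.mem_dualCoannihilator]
      intro φ hφ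
      have h1 : γ (Pmap φ) = 0 := h _ (Submodule.mem_map_of_mem hφ)
      have h2 := hskew γ φ
      linarith
    · intro h
      rw [Submodule.mem_dualAnnihilator]
      intro v hv
      rw [hNdef, Submodule.mem_map] at hv
      obtain ⟨φ, hφ, rfl⟩ := hv
      rw [Submodule.mem_dualAnnihilator] at hφ
      have h1 : φ (Pmap γ) = 0 := hφ _ h
      have h2 := hskew γ φ
      linarith
  -- N ∩ W = 0 trivia, extension lemma
  have hWN : W ⊓ N = ⊥ := hW
  -- an extension of any functional on W that vanishes on N
  have hext : ∀ β : Module.Dual ℝ W, ∃ γ : Module.Dual ℝ V,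
      (∀ v ∈ N, γ v = 0) ∧ W.dualRestrict γ = β := by
    -- build a complement of W containing N
    obtain ⟨C, hC⟩ := Submodule.exists_isCompl (W ⊔ N)
    have hcompl : IsCompl W (N ⊔ C) := by
      constructor
      · rw [disjoint_iff]
        rw [eq_bot_iff]
        intro x hx
        obtain ⟨hxW, hxNC⟩ := hx
        simp only [SetLike.mem_coe] at hxW hxNC
        rw [Submodule.mem_sup] at hxNC
        obtain ⟨nn, hn, c, hc2, rfl⟩ := hxNC
        have hcWN : c ∈ (W ⊔ N) ⊓ C := by
          constructor
          · have : c = (nn + c) - nn := by abel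
            rw [this]
            exact Submodule.sub_mem _ (Submodule.mem_sup_left hxW)
              (Submodule.mem_sup_right hn)
          · exact hc2
        rw [hC.inf_eq_bot] at hcWN
        rw [Submodule.mem_bot] at hcWN
        subst hcWN
        have : nn ∈ W ⊓ N := ⟨by simpa using hxW, hn⟩
        rw [hWN] at this
        simpa using this
      · rw [codisjoint_iff, ← sup_assoc, hC.sup_eq_top]
    intro β
    refine ⟨β.comp (W.linearProjOfIsCompl (N ⊔ C) hcompl), ?_, ?_⟩
    · intro v hv
      have : (W.linearProjOfIsCompl (N ⊔ C) hcompl) v = 0 :=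
        Submodule.linearProjOfIsCompl_apply_right hcompl ⟨v, Submodule.mem_sup_left hv⟩
      simp [this]
    · apply LinearMap.ext
      intro w
      have : (W.linearProjOfIsCompl (N ⊔ C) hcompl) (w : V) = w :=
        Submodule.linearProjOfIsCompl_apply_left hcompl w
      simp [Submodule.dualRestrict_apply, this]
  -- characterization of when B (γ|W) = 0 for γ vanishing on N
  have hB0 : ∀ γ : Module.Dual ℝ V, (∀ v ∈ N, γ v = 0) →
      (B (W.dualRestrict γ) = 0 ↔ Pmap γ = 0) := by
    intro γ hγ
    constructor
    · intro h
      have hmemN : Pmap γ ∈ N := by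
        rw [← Subspace.dualAnnihilator_dualCoannihilator_eq (W := N),
          Submodule.mem_dualCoannihilator]
        intro φ hφ
        rw [Submodule.mem_dualAnnihilator] at hφ
        have hBval : B (W.dualRestrict γ) (W.dualRestrict φ) = γ (Pmap φ) :=
          hB _ _ γ φ (fun w => rfl) (fun w => rfl) hγ hφ
        rw [h] at hBval
        simp only [LinearMap.zero_apply] at hBval
        have h2 := hskew γ φ
        linarith
      have hmemW : Pmap γ ∈ W := by
        rw [← hkey]
        rw [Submodule.mem_dualAnnihilator]
        exact hγ
      have : Pmap γ ∈ W ⊓ N := ⟨hmemW, hmemN⟩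
      rw [hWN] at this
      simpa using this
    · intro h
      apply LinearMap.ext
      intro β
      obtain ⟨δ, hδN, hδW⟩ := hext β
      have hBval : B (W.dualRestrict γ) (W.dualRestrict δ) = γ (Pmap δ) :=
        hB _ _ γ δ (fun w => rfl) (fun w => rfl) hγ hδN
      rw [hδW] at hBval
      rw [hBval]
      have h2 := hskew γ δ
      rw [h] at h2
      simp only [map_zero, LinearMap.zero_apply] at h2 ⊢
      linarith
  -- the composite map
  set G : Module.Dual ℝ V →ₗ[ℝ] (Module.Dual ℝ W →ₗ[ℝ] ℝ) := B.comp W.dualRestrict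
    with hGdef
  have hrangeG : LinearMap.range G = LinearMap.range B := by
    rw [hGdef, LinearMap.range_comp,
      LinearMap.range_eq_top.mpr (Subspace.dualRestrict_surjective (W := W)),
      Submodule.map_top]
  -- kernel of G
  have hkerG : LinearMap.ker G = LinearMap.ker Pmap ⊔ W.dualAnnihilator := by
    apply le_antisymm
    · intro γ hγ
      rw [LinearMap.mem_ker] at hγ
      obtain ⟨δ, hδN, hδW⟩ := hext (W.dualRestrict γ)
      have hPδ : Pmap δ = 0 := by
        rw [← hB0 δ hδN, hδW]
        exact hγ
      rw [Submodule.mem_sup]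
      refine ⟨δ, by rwa [LinearMap.mem_ker], γ - δ, ?_, by abel⟩
      rw [Submodule.mem_dualAnnihilator]
      intro w hw
      have := LinearMap.congr_fun hδW ⟨w, hw⟩
      simp only [Submodule.dualRestrict_apply] at this
      simp [this]
    · apply sup_le
      · intro γ hγ
        rw [LinearMap.mem_ker] at hγ ⊢
        have hγN : ∀ v ∈ N, γ v = 0 := by
          have : γ ∈ N.dualAnnihilator := by
            rw [hkey, hγ]
            exact W.zero_mem
          rw [Submodule.mem_dualAnnihilator] at this
          exact this
        exact (hB0 γ hγN).mpr hγ
      · intro γ hγ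
        rw [Submodule.mem_dualAnnihilator] at hγ
        rw [LinearMap.mem_ker, hGdef]
        have : W.dualRestrict γ = 0 := by
          apply LinearMap.ext
          intro w
          simpa using hγ w w.2
        simp [LinearMap.comp_apply, this]
  -- ker Pmap is the annihilator of range Pmap
  have hkerP : LinearMap.ker Pmap = (LinearMap.range Pmap).dualAnnihilator := by
    ext γ
    rw [LinearMap.mem_ker, Submodule.mem_dualAnnihilator]
    constructor
    · intro h v hv
      obtain ⟨δ, rfl⟩ := hv
      have := hskew γ δ
      rw [h] at this
      simpa using this
    · intro h
      rw [← Module.forall_dual_apply_eq_zero_iff ℝ]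
      intro δ
      have h1 : γ (Pmap δ) = 0 := h _ ⟨δ, rfl⟩
      have h2 := hskew γ δ
      linarith
  have hkerG2 : LinearMap.ker G = (LinearMap.range Pmap ⊓ W).dualAnnihilator := by
    rw [Subspace.dualAnnihilator_inf_eq, hkerG, hkerP]
  -- W° ⊔ N° = ⊤
  have hsupAnn : W.dualAnnihilator ⊔ N.dualAnnihilator = ⊤ := by
    rw [← Subspace.dualAnnihilator_inf_eq, hWN, Submodule.dualAnnihilator_bot]
  -- range Pmap = (range Pmap ⊓ W) ⊔ N
  have hdecomp : (LinearMap.range Pmap ⊓ W) ⊔ N = LinearMap.range Pmap := by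
    apply le_antisymm
    · apply sup_le inf_le_left
      rw [hNdef]
      exact LinearMap.map_le_range
    · rintro v ⟨γ, rfl⟩
      have : γ ∈ W.dualAnnihilator ⊔ N.dualAnnihilator := by
        rw [hsupAnn]; trivial
      rw [Submodule.mem_sup] at this
      obtain ⟨φ, hφ, δ, hδ, rfl⟩ := this
      rw [map_add]
      apply Submodule.add_mem
      · apply Submodule.mem_sup_right
        rw [hNdef]
        exact Submodule.mem_map_of_mem hφ
      · apply Submodule.mem_sup_left
        exact ⟨⟨δ, rfl⟩, (hkey δ).mp hδ⟩
  have hinfbot : (LinearMap.range Pmap ⊓ W) ⊓ N = ⊥ := by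
    rw [eq_bot_iff]
    intro x hx
    rw [← hWN]
    exact ⟨hx.1.2, hx.2⟩
  -- dimension bookkeeping
  have hd1 : Module.finrank ℝ ↥(LinearMap.range Pmap ⊓ W) + Module.finrank ℝ ↥N
      = Module.finrank ℝ (LinearMap.range Pmap) := by
    have := Submodule.finrank_sup_add_finrank_inf_eq (LinearMap.range Pmap ⊓ W) N
    rw [hdecomp, hinfbot] at this
    rw [finrank_bot ℝ V, add_zero] at this
    omega
  have hd2 : Module.finrank ℝ (LinearMap.range G) + Module.finrank ℝ (LinearMap.ker G)
      = Module.finrank ℝ (Module.Dual ℝ V) :=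
    LinearMap.finrank_range_add_finrank_ker G
  have hd3 : Module.finrank ℝ (LinearMap.ker G)
      + Module.finrank ℝ ↥(LinearMap.range Pmap ⊓ W)
      = Module.finrank ℝ V := by
    have h4 := Subspace.finrank_add_finrank_dualCoannihilator_eq
      (LinearMap.range Pmap ⊓ W).dualAnnihilator
    rw [Subspace.dualAnnihilator_dualCoannihilator_eq] at h4
    rw [hkerG2]
    exact h4
  have hd4 : Module.finrank ℝ (Module.Dual ℝ V) = Module.finrank ℝ V :=
    Subspace.dual_finrank_eq
  rw [hrangeG] at hd2
  omega
end

section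
/- Let u, v ∈ ℝ, p = (u, v, u, v), and let α, β ∈ ℝ⁴ represent covectors in the dual standard basis such that Π(p)·α ∈ T and Π(p)·β ∈ T. Then αᵀ Π(p) β = u v (α_u β_v − α_v β_u), where α_u := α₁ + α₃ = α·(1,0,1,0), α_v := α₂ + α₄ = α·(0,1,0,1), and similarly for β. (Computation of the induced Poisson bivector π_N on the Poisson–Dirac submanifold N, evaluated on extensions of one-forms whose images under the anchor map are tangent to N: π_N is proportional to uv ∂u∧∂v.) -/
open Matrix

/-- The matrix of the anchor map of the Lotka–Volterra Poisson bracket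
at the point `(x,y,z,w)`. -/
def LV (x y z w : ℝ) : Matrix (Fin 4) (Fin 4) ℝ :=
  !![0, x * y, 0, x * w;
     -(x * y), 0, y * z, 0;
     0, -(y * z), 0, z * w;
     -(x * w), 0, -(z * w), 0]

/-- The tangent space of the graph `N = {(u,v,u,v)}`. -/
def Tgraph : Submodule ℝ (Fin 4 → ℝ) :=
  Submodule.span ℝ {![1, 0, 1, 0], ![0, 1, 0, 1]}

lemma Tgraph_eq (w : Fin 4 → ℝ) (hw : w ∈ Tgraph) : w 0 = w 2 ∧ w 1 = w 3 := by
  rw [Tgraph, Submodule.mem_span_pair] at hw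
  obtain ⟨c, d, h⟩ := hw
  constructor
  · have h0 := congrFun h 0
    have h2 := congrFun h 2
    simp at h0 h2
    rw [← h0, ← h2]
  · have h1 := congrFun h 1
    have h3 := congrFun h 3
    simp at h1 h3
    rw [← h1, ← h3]

lemma key (u v : ℝ) (α : Fin 4 → ℝ) (h : (LV u v u v).mulVec α ∈ Tgraph) :
    u * v * α 1 = 0 ∧ u * v * α 2 = 0 := by
  obtain ⟨h02, h13⟩ := Tgraph_eq _ h
  simp [LV, mulVec, dotProduct, Fin.sum_univ_four] at h02 h13
  constructor <;> nlinarith [h02, h13]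

/-- For covectors `α, β` whose images under the anchor map are
tangent to `N`, the induced bivector on the Poisson–Dirac submanifold `N` is
`αᵀ Π(p) β = u v (α_u β_v − α_v β_u)` with `α_u = α₁ + α₃`, `α_v = α₂ + α₄`. -/
theorem LV_graph_induced_bivector (u v : ℝ) (α β : Fin 4 → ℝ)
    (hα : (LV u v u v).mulVec α ∈ Tgraph)
    (hβ : (LV u v u v).mulVec β ∈ Tgraph) :
    α ⬝ᵥ (LV u v u v).mulVec β
      = u * v * ((α 0 + α 2) * (β 1 + β 3) - (α 1 + α 3) * (β 0 + β 2)) := by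
  obtain ⟨ha1, ha2⟩ := key u v α hα
  obtain ⟨hb1, hb2⟩ := key u v β hβ
  simp [LV, mulVec, dotProduct, Fin.sum_univ_four]
  linear_combination (2 * β 2) * ha1 - (2 * α 2) * hb1
end
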